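/- Let g_ξ solve the Poisson Stein equation λ g(x+1) − x g(x) = 𝟙[x = ξ] − p(ξ) with g(0) = 0. Then sup_{x∈ℕ} |g_ξ(x+1) − g_ξ(x)| = P(ξ−1)/ξ + (1−P(ξ))/λ, and this quantity is at most min( 1/ξ, (1−e^{-λ})/λ ). -/

import Mathlib

open Real MeasureTheory Set

/-- Poisson(λ) pmf on ℕ. -/
noncomputable def poisPmf (lam : ℝ) (x : ℕ) : ℝ :=
  Real.exp (-lam) * lam ^ x / (Nat.factorial x : ℝ)

/-- Poisson(λ) cdf on ℕ: `P(x) = Σ_{j ≤ x} p(j)`. -/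
noncomputable def poisCdf (lam : ℝ) (x : ℕ) : ℝ :=
  ∑ j ∈ Finset.range (x + 1), poisPmf lam j


noncomputable def pTail (lam : ℝ) (x : ℕ) : ℝ := ∑' j : ℕ, poisPmf lam (j + (x + 1))

section base
variable {lam : ℝ}

lemma pmf_pos (hlam : 0 < lam) (x : ℕ) : 0 < poisPmf lam x := by
  unfold poisPmf
  have h1 : (0:ℝ) < Nat.factorial x := by exact_mod_cast Nat.factorial_pos x
  positivity

lemma summable_pois : Summable (poisPmf lam) := by
  unfold poisPmf
  simpa [mul_div_assoc] using (Real.summable_pow_div_factorial lam).mul_left (Real.exp (-lam))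

lemma summable_pois_add (k : ℕ) : Summable (fun j => poisPmf lam (j + k)) :=
  (summable_nat_add_iff k).2 summable_pois

lemma tsum_pois : ∑' x, poisPmf lam x = 1 := by
  unfold poisPmf
  calc (∑' x : ℕ, Real.exp (-lam) * lam ^ x / (Nat.factorial x : ℝ))
      = Real.exp (-lam) * ∑' x : ℕ, lam ^ x / (Nat.factorial x : ℝ) := by
        rw [← tsum_mul_left]; simp [mul_div_assoc]
    _ = 1 := by
        have : (∑' x : ℕ, lam ^ x / (Nat.factorial x : ℝ)) = Real.exp lam := by
          rw [Real.exp_eq_exp_ℝ, NormedSpace.exp_eq_tsum_div]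
        rw [this, ← Real.exp_add]; simp

lemma cdf_add_tail (x : ℕ) : poisCdf lam x + pTail lam x = 1 := by
  rw [poisCdf, pTail, summable_pois.sum_add_tsum_nat_add (x + 1), tsum_pois]

lemma tail_pos (hlam : 0 < lam) (x : ℕ) : 0 < pTail lam x := by
  have : pTail lam x = poisPmf lam (x + 1) + ∑' j : ℕ, poisPmf lam (j + (x + 2)) := by
    rw [pTail, (summable_pois_add (x + 1)).tsum_eq_zero_add]
    simp [add_assoc, add_comm, add_left_comm]
  rw [this]
  have h2 : 0 ≤ ∑' j : ℕ, poisPmf lam (j + (x + 2)) :=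
    tsum_nonneg (fun j => (pmf_pos hlam _).le)
  linarith [pmf_pos hlam (x + 1)]

lemma tail_succ (hlam : 0 < lam) (x : ℕ) :
    pTail lam x = poisPmf lam (x + 1) + pTail lam (x + 1) := by
  rw [pTail, pTail, (summable_pois_add (x + 1)).tsum_eq_zero_add]
  congr 1
  · simp
  · apply tsum_congr; intro j; congr 1; omega

lemma cdf_pos (hlam : 0 < lam) (x : ℕ) : 0 < poisCdf lam x :=
  Finset.sum_pos (fun j _ => pmf_pos hlam j) (by simp)

lemma cdf_lt_one (hlam : 0 < lam) (x : ℕ) : poisCdf lam x < 1 := by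
  have := cdf_add_tail (lam := lam) x
  linarith [tail_pos hlam x]

lemma pmf_step (x : ℕ) :
    lam * poisPmf lam x = ((x : ℝ) + 1) * poisPmf lam (x + 1) := by
  unfold poisPmf
  rw [Nat.factorial_succ]
  push_cast
  have h1 : (Nat.factorial x : ℝ) ≠ 0 := by exact_mod_cast (Nat.factorial_pos x).ne'
  have h2 : ((x : ℝ) + 1) ≠ 0 := by positivity
  field_simp
  ring

lemma keyS (hlam : 0 < lam) (x : ℕ) :
    lam * poisCdf lam x ≤ ((x : ℝ) + 1) * (poisCdf lam (x + 1) - poisPmf lam 0) := by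
  have h1 : lam * poisCdf lam x
      = ∑ j ∈ Finset.range (x + 1), ((j : ℝ) + 1) * poisPmf lam (j + 1) := by
    rw [poisCdf, Finset.mul_sum]
    exact Finset.sum_congr rfl (fun j _ => pmf_step j)
  have h2 : poisCdf lam (x + 1) - poisPmf lam 0
      = ∑ j ∈ Finset.range (x + 1), poisPmf lam (j + 1) := by
    rw [poisCdf, Finset.sum_range_succ' _ (x + 1)]
    ring
  rw [h1, h2, Finset.mul_sum]
  apply Finset.sum_le_sum
  intro j hj
  have hjx : (j : ℝ) + 1 ≤ (x : ℝ) + 1 := by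
    have h := Finset.mem_range.1 hj
    have : (j:ℝ) ≤ (x:ℝ) := by exact_mod_cast Nat.lt_succ_iff.mp h
    linarith
  exact mul_le_mul_of_nonneg_right hjx (pmf_pos hlam _).le

lemma keyT (hlam : 0 < lam) (x : ℕ) :
    ((x : ℝ) + 1) * pTail lam (x + 1) ≤ lam * pTail lam x := by
  have h1 : lam * pTail lam x = ∑' j : ℕ, ((j : ℝ) + (x : ℝ) + 2) * poisPmf lam (j + (x + 2)) := by
    rw [pTail, ← tsum_mul_left]
    apply tsum_congr; intro j
    have := pmf_step (lam := lam) (j + (x + 1))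
    push_cast at this ⊢
    rw [this]; ring_nf
  have h2 : ((x : ℝ) + 1) * pTail lam (x + 1)
      = ∑' j : ℕ, ((x : ℝ) + 1) * poisPmf lam (j + (x + 2)) := by
    rw [pTail, ← tsum_mul_left]
  rw [h1, h2]
  apply Summable.tsum_le_tsum
  · intro j
    apply mul_le_mul_of_nonneg_right _ (pmf_pos hlam _).le
    have : (0:ℝ) ≤ (j : ℝ) := Nat.cast_nonneg j
    linarith
  · exact (summable_pois_add (x + 2)).mul_left _
  · apply ((summable_pois_add (x + 1)).mul_left lam).congr
    intro j
    have h := pmf_step (lam := lam) (j + (x + 1))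
    push_cast at h
    rw [show j + (x + 2) = (j + (x + 1)) + 1 from by omega]
    rw [h]; push_cast; ring

end base
noncomputable def steinG (lam : ℝ) (ξ : ℕ) : ℕ → ℝ
  | 0 => 0
  | (x + 1) => (Nat.factorial x : ℝ) / lam ^ (x + 1) * (lam ^ ξ / (Nat.factorial ξ : ℝ)) *
      (if x < ξ then -(poisCdf lam x) else pTail lam x)

section stein
variable {lam : ℝ} {ξ : ℕ}

lemma cdf_succ (x : ℕ) : poisCdf lam (x + 1) = poisCdf lam x + poisPmf lam (x + 1) :=
  Finset.sum_range_succ _ _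

lemma steinG_rec (hlam : 0 < lam) (hξ : 1 ≤ ξ) (x : ℕ) :
    lam * steinG lam ξ (x + 1) - (x : ℝ) * steinG lam ξ x
      = (if x = ξ then (1 : ℝ) else 0) - poisPmf lam ξ := by
  have hl : lam ≠ 0 := hlam.ne'
  have hfx : ∀ n : ℕ, ((Nat.factorial n : ℝ)) ≠ 0 :=
    fun n => by exact_mod_cast (Nat.factorial_pos n).ne'
  have hpow : ∀ n : ℕ, lam ^ n ≠ 0 := fun n => pow_ne_zero n hl
  rcases Nat.lt_trichotomy x ξ with h | h | h
  · -- x < ξ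
    have hne : x ≠ ξ := h.ne
    cases x with
    | zero =>
      have h0 : (0 : ℕ) < ξ := h
      simp only [steinG, if_pos h0, hne, if_neg hne, Nat.cast_zero, zero_mul, sub_zero, ↓reduceIte]
      have hS0 : poisCdf lam 0 = poisPmf lam 0 := by simp [poisCdf]
      rw [hS0]
      unfold poisPmf
      simp only [Nat.factorial_zero, Nat.cast_one, pow_zero, pow_one]
      field_simp
      ring
    | succ y =>
      have hy : y < ξ := by omega
      simp only [steinG, if_pos h, if_pos hy, if_neg hne]
      rw [cdf_succ y]
      unfold poisPmf
      rw [Nat.factorial_succ]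
      push_cast
      field_simp
      ring
  · -- x = ξ
    subst h
    obtain ⟨y, rfl⟩ : ∃ y, x = y + 1 := ⟨x - 1, by omega⟩
    have hy : y < y + 1 := Nat.lt_succ_self y
    have hny : ¬(y + 1 < y + 1) := lt_irrefl _
    simp only [steinG, if_pos hy, if_neg hny, if_pos rfl]
    have key : poisCdf lam y + poisPmf lam (y + 1) + pTail lam (y + 1) = 1 := by
      have h1 := cdf_add_tail (lam := lam) y
      have h2 := tail_succ hlam y
      linarith
    rw [Nat.factorial_succ]
    push_cast
    have hT : pTail lam (y + 1) = 1 - poisCdf lam y - poisPmf lam (y + 1) := by linarith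
    rw [hT]
    unfold poisPmf
    field_simp
    ring
  · -- ξ < x
    have hne : x ≠ ξ := by omega
    obtain ⟨y, rfl⟩ : ∃ y, x = y + 1 := ⟨x - 1, by omega⟩
    have hny : ¬(y < ξ) := by omega
    have hny1 : ¬(y + 1 < ξ) := by omega
    simp only [steinG, if_neg hny, if_neg hny1, if_neg hne]
    rw [tail_succ hlam y]
    unfold poisPmf
    rw [Nat.factorial_succ]
    push_cast
    field_simp
    ring

lemma g_eq_steinG (hlam : 0 < lam) (hξ : 1 ≤ ξ) (g : ℕ → ℝ) (hg0 : g 0 = 0)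
    (hsteq : ∀ x : ℕ,
      lam * g (x + 1) - (x : ℝ) * g x = (if x = ξ then (1 : ℝ) else 0) - poisPmf lam ξ)
    (x : ℕ) : g x = steinG lam ξ x := by
  induction x with
  | zero => simpa [steinG] using hg0
  | succ n ih =>
    have h1 := hsteq n
    have h2 := steinG_rec hlam hξ (lam := lam) n
    rw [ih] at h1
    have : lam * g (n + 1) = lam * steinG lam ξ (n + 1) := by linarith
    exact mul_left_cancel₀ hlam.ne' this

lemma G_nonpos (hlam : 0 < lam) {x : ℕ} (h : x ≤ ξ) : steinG lam ξ x ≤ 0 := by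
  cases x with
  | zero => simp [steinG]
  | succ y =>
    have hy : y < ξ := by omega
    simp only [steinG, if_pos hy]
    have h1 : 0 ≤ (Nat.factorial y : ℝ) / lam ^ (y + 1) * (lam ^ ξ / (Nat.factorial ξ : ℝ)) := by
      positivity
    have h2 : 0 < poisCdf lam y := cdf_pos hlam y
    nlinarith

lemma G_nonneg (hlam : 0 < lam) {x : ℕ} (h : ξ < x) : 0 ≤ steinG lam ξ x := by
  obtain ⟨y, rfl⟩ : ∃ y, x = y + 1 := ⟨x - 1, by omega⟩
  have hy : ¬(y < ξ) := by omega
  simp only [steinG, if_neg hy]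
  have := (tail_pos hlam y).le
  positivity

lemma deltaA (hlam : 0 < lam) {x : ℕ} (h : x < ξ) :
    steinG lam ξ (x + 1) ≤ steinG lam ξ x := by
  cases x with
  | zero =>
    exact le_of_le_of_eq (G_nonpos hlam (by omega : 0 + 1 ≤ ξ))
      (rfl : steinG lam ξ 0 = 0).symm
  | succ y =>
    have hy : y < ξ := by omega
    set K : ℝ := (Nat.factorial y : ℝ) * (lam ^ ξ / (Nat.factorial ξ : ℝ)) / lam ^ (y + 2) with hK
    have hK0 : 0 ≤ K := by positivity
    have e1 : steinG lam ξ (y + 2) = -(K * (((y : ℝ) + 1) * poisCdf lam (y + 1))) := by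
      simp only [steinG, if_pos h, hK]
      rw [Nat.factorial_succ]
      push_cast
      field_simp
    have e2 : steinG lam ξ (y + 1) = -(K * (lam * poisCdf lam y)) := by
      simp only [steinG, if_pos hy, hK]
      have : lam ^ (y + 2) = lam ^ (y + 1) * lam := by ring
      rw [this]
      field_simp
    rw [e1, e2, neg_le_neg_iff]
    apply mul_le_mul_of_nonneg_left _ hK0
    have h1 := keyS hlam y
    have h2 := pmf_pos hlam 0
    have h3 : (0 : ℝ) ≤ (y : ℝ) + 1 := by positivity
    nlinarith

lemma deltaB (hlam : 0 < lam) {x : ℕ} (h : ξ < x) :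
    steinG lam ξ (x + 1) ≤ steinG lam ξ x := by
  obtain ⟨y, rfl⟩ : ∃ y, x = y + 1 := ⟨x - 1, by omega⟩
  have hy : ¬(y < ξ) := by omega
  have hy1 : ¬(y + 1 < ξ) := by omega
  set K : ℝ := (Nat.factorial y : ℝ) * (lam ^ ξ / (Nat.factorial ξ : ℝ)) / lam ^ (y + 2) with hK
  have hK0 : 0 ≤ K := by positivity
  have e1 : steinG lam ξ (y + 2) = K * (((y : ℝ) + 1) * pTail lam (y + 1)) := by
    simp only [steinG, if_neg hy1, hK]
    rw [Nat.factorial_succ]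
    push_cast
    field_simp
  have e2 : steinG lam ξ (y + 1) = K * (lam * pTail lam y) := by
    simp only [steinG, if_neg hy, hK]
    have : lam ^ (y + 2) = lam ^ (y + 1) * lam := by ring
    rw [this]
    field_simp
  rw [e1, e2]
  exact mul_le_mul_of_nonneg_left (keyT hlam y) hK0

lemma chain_down (hlam : 0 < lam) (d x : ℕ) (h : x + d ≤ ξ) :
    steinG lam ξ (x + d) ≤ steinG lam ξ x := by
  induction d with
  | zero => exact le_of_eq (by rw [Nat.add_zero])
  | succ n ih =>
    have h1 : x + n < ξ := by omega
    have := deltaA hlam (lam := lam) h1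
    have h2 := ih (by omega)
    calc steinG lam ξ (x + (n + 1)) = steinG lam ξ ((x + n) + 1) := by ring_nf
      _ ≤ steinG lam ξ (x + n) := this
      _ ≤ steinG lam ξ x := h2

lemma chain_downB (hlam : 0 < lam) (d x : ℕ) (h : ξ + 1 ≤ x) :
    steinG lam ξ (x + d) ≤ steinG lam ξ x := by
  induction d with
  | zero => exact le_of_eq (by rw [Nat.add_zero])
  | succ n ih =>
    have h1 : ξ < x + n := by omega
    calc steinG lam ξ (x + (n + 1)) = steinG lam ξ ((x + n) + 1) := by ring_nf
      _ ≤ steinG lam ξ (x + n) := deltaB hlam h1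
      _ ≤ steinG lam ξ x := ih

lemma G_xi_succ (hlam : 0 < lam) : steinG lam ξ (ξ + 1) = pTail lam ξ / lam := by
  simp only [steinG, lt_irrefl, if_neg (lt_irrefl ξ), ↓reduceIte]
  have hfx : ((Nat.factorial ξ : ℝ)) ≠ 0 := by exact_mod_cast (Nat.factorial_pos ξ).ne'
  have : lam ^ (ξ + 1) = lam ^ ξ * lam := by ring
  rw [this]
  field_simp

lemma G_xi (hlam : 0 < lam) (hξ : 1 ≤ ξ) :
    steinG lam ξ ξ = -(poisCdf lam (ξ - 1) / (ξ : ℝ)) := by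
  obtain ⟨y, rfl⟩ : ∃ y, ξ = y + 1 := ⟨ξ - 1, by omega⟩
  have hy : y < y + 1 := Nat.lt_succ_self y
  simp only [steinG, if_pos hy, Nat.add_sub_cancel]
  rw [Nat.factorial_succ]
  have hfy : ((Nat.factorial y : ℝ)) ≠ 0 := by exact_mod_cast (Nat.factorial_pos y).ne'
  have hpy : lam ^ (y + 1) ≠ 0 := pow_ne_zero _ hlam.ne'
  push_cast
  field_simp

end stein
/-- For the solution of the Poisson Stein equation for the point mass at `ξ ≥ 1`:
`sup_x |g(x+1) - g(x)| = P(ξ-1)/ξ + (1-P(ξ))/λ ≤ min(1/ξ, (1-e^{-λ})/λ)`. -/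
theorem stmt11 (lam : ℝ) (hlam : 0 < lam) (ξ : ℕ) (hξ : 1 ≤ ξ) (g : ℕ → ℝ)
    (hg0 : g 0 = 0)
    (hsteq : ∀ x : ℕ,
      lam * g (x + 1) - (x : ℝ) * g x = (if x = ξ then (1 : ℝ) else 0) - poisPmf lam ξ) :
    (⨆ x : ℕ, |g (x + 1) - g x|) = poisCdf lam (ξ - 1) / (ξ : ℝ) + (1 - poisCdf lam ξ) / lam ∧
    poisCdf lam (ξ - 1) / (ξ : ℝ) + (1 - poisCdf lam ξ) / lam ≤
      min (1 / (ξ : ℝ)) ((1 - Real.exp (-lam)) / lam) := by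
  have hg := g_eq_steinG hlam hξ g hg0 hsteq
  have hξpos : (0 : ℝ) < (ξ : ℝ) := by exact_mod_cast hξ
  set M : ℝ := poisCdf lam (ξ - 1) / (ξ : ℝ) + (1 - poisCdf lam ξ) / lam with hM
  have hT : pTail lam ξ = 1 - poisCdf lam ξ := by
    have := cdf_add_tail (lam := lam) ξ; linarith
  have hGxi1 : steinG lam ξ (ξ + 1) = (1 - poisCdf lam ξ) / lam := by
    rw [G_xi_succ hlam, hT]
  have hGxi : steinG lam ξ ξ = -(poisCdf lam (ξ - 1) / (ξ : ℝ)) := G_xi hlam hξ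
  have hMalt : steinG lam ξ (ξ + 1) - steinG lam ξ ξ = M := by
    rw [hGxi1, hGxi, hM]; ring
  have hScdf : 0 ≤ poisCdf lam (ξ - 1) / (ξ : ℝ) :=
    div_nonneg (cdf_pos hlam _).le hξpos.le
  have hTdiv : 0 ≤ (1 - poisCdf lam ξ) / lam :=
    div_nonneg (by rw [← hT]; exact (tail_pos hlam ξ).le) hlam.le
  have hM0 : 0 ≤ M := add_nonneg hScdf hTdiv
  have bound : ∀ x : ℕ, |steinG lam ξ (x + 1) - steinG lam ξ x| ≤ M := by
    intro x
    rcases Nat.lt_trichotomy x ξ with h | h | h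
    · have d1 : steinG lam ξ (x + 1) ≤ steinG lam ξ x := deltaA hlam h
      rw [abs_of_nonpos (by linarith)]
      have h1 : steinG lam ξ x ≤ 0 := G_nonpos hlam h.le
      have h2 := chain_down (lam := lam) (ξ := ξ) hlam (ξ - (x + 1)) (x + 1) (by omega)
      rw [show x + 1 + (ξ - (x + 1)) = ξ from by omega] at h2
      rw [hGxi] at h2
      linarith
    · subst h
      rw [hMalt, abs_of_nonneg hM0]
    · have d1 : steinG lam ξ (x + 1) ≤ steinG lam ξ x := deltaB hlam h
      rw [abs_of_nonpos (by linarith)]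
      have h1 : 0 ≤ steinG lam ξ (x + 1) := G_nonneg hlam (by omega)
      have h2 := chain_downB (lam := lam) (ξ := ξ) hlam (x - (ξ + 1)) (ξ + 1) le_rfl
      rw [show ξ + 1 + (x - (ξ + 1)) = x from by omega] at h2
      rw [hGxi1] at h2
      linarith
  have boundg : ∀ x : ℕ, |g (x + 1) - g x| ≤ M := by
    intro x; rw [hg, hg]; exact bound x
  constructor
  · apply le_antisymm
    · exact ciSup_le boundg
    · have hbdd : BddAbove (Set.range fun x : ℕ => |g (x + 1) - g x|) := by
        refine ⟨M, ?_⟩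
        rintro v ⟨x, rfl⟩
        exact boundg x
      have heq : |g (ξ + 1) - g ξ| = M := by
        rw [hg, hg, hMalt, abs_of_nonneg hM0]
      calc M = |g (ξ + 1) - g ξ| := heq.symm
        _ ≤ ⨆ x : ℕ, |g (x + 1) - g x| := le_ciSup hbdd ξ
  · obtain ⟨y, rfl⟩ : ∃ y, ξ = y + 1 := ⟨ξ - 1, by omega⟩
    have hcast : ((y : ℝ) + 1) = ((y + 1 : ℕ) : ℝ) := by push_cast; ring
    apply le_min
    · -- M ≤ 1/ξ
      have hkT := keyT hlam y
      have hST := cdf_add_tail (lam := lam) y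
      have hTy1 : pTail lam (y + 1) = 1 - poisCdf lam (y + 1) := hT
      have hdiv : (1 - poisCdf lam (y + 1)) / lam ≤ pTail lam y / ((y + 1 : ℕ) : ℝ) := by
        rw [div_le_div_iff₀ hlam hξpos]
        push_cast at hkT ⊢
        nlinarith [tail_pos hlam (y + 1)]
      have : poisCdf lam y / ((y + 1 : ℕ) : ℝ) + pTail lam y / ((y + 1 : ℕ) : ℝ)
          = 1 / ((y + 1 : ℕ) : ℝ) := by
        rw [← add_div, hST]
      rw [hM]
      simp only [Nat.add_sub_cancel]
      linarith
    · -- M ≤ (1 - e^{-λ})/λ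
      have hkS := keyS hlam y
      have hp0 : poisPmf lam 0 = Real.exp (-lam) := by simp [poisPmf]
      have hdiv : poisCdf lam y / ((y + 1 : ℕ) : ℝ)
          ≤ (poisCdf lam (y + 1) - Real.exp (-lam)) / lam := by
        rw [div_le_div_iff₀ hξpos hlam]
        rw [hp0] at hkS
        push_cast at hkS ⊢
        linear_combination hkS
      have hsum : (poisCdf lam (y + 1) - Real.exp (-lam)) / lam
          + (1 - poisCdf lam (y + 1)) / lam = (1 - Real.exp (-lam)) / lam := by
        rw [← add_div]
        ring_nf
      rw [hM]
      simp only [Nat.add_sub_cancel]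
      linarith
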